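/- arXiv:1207.2430 — 2 statements merged into one kernel-verified Lean document; each statement's English description precedes it below -/
import Mathlib

section
/- Let G = (V,E) be a graph with V nonempty. Call U ⊆ V essential if there exists v ∈ V with N[v] ⊆ U. Then D(G,x) = (−1)^{|V|} · ∑_{U essential} (−1)^{|U|} · [ (1+x)^{|{u ∈ U : N[u] ⊆ U}|} − 1 ]. -/
open Finset Polynomial

variable {V : Type*}

def dominates (H : SimpleGraph V) (W : Finset V) : Prop :=
  ∀ v : V, v ∈ W ∨ ∃ u ∈ W, H.Adj u v

open scoped Classical in
noncomputable def domPoly [Fintype V] (H : SimpleGraph V) : Polynomial ℤ :=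
  ∑ W ∈ Finset.univ.powerset.filter (fun W => dominates H W), X ^ W.card

open scoped Classical in
noncomputable def compOrders [Fintype V] (H : SimpleGraph V) : Multiset ℕ :=
  (Finset.univ : Finset H.ConnectedComponent).val.map (fun c => Nat.card c.supp)

lemma aux_L1 {α : Type*} [DecidableEq α] {R : Type*} [CommRing R] (x : R) (S : Finset α) :
    ∑ W ∈ S.powerset, x ^ W.card = (1 + x) ^ S.card := by
  induction S using Finset.induction with
  | empty => simp
  | @insert a S ha ih =>
    rw [Finset.sum_powerset_insert ha, Finset.card_insert_of_notMem ha, pow_succ]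
    have : ∑ t ∈ S.powerset, x ^ (insert a t).card = ∑ t ∈ S.powerset, x ^ t.card * x := by
      refine Finset.sum_congr rfl fun t ht => ?_
      rw [Finset.card_insert_of_notMem (fun h => ha (Finset.mem_powerset.mp ht h)), pow_succ]
    rw [this, ← Finset.sum_mul, ih]
    ring

lemma aux_L2 {α : Type*} [DecidableEq α] {R : Type*} [CommRing R] (S : Finset α) :
    ∑ W ∈ S.powerset, (-1 : R) ^ W.card = if S = ∅ then 1 else 0 := by
  have := aux_L1 (-1 : R) S
  simp only [add_neg_cancel, zero_pow_eq, Finset.card_eq_zero] at this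
  rw [this]

lemma aux_L3 {α : Type*} [DecidableEq α] [Fintype α] {R : Type*} [CommRing R] (A : Finset α) :
    ∑ U ∈ (Finset.univ : Finset α).powerset.filter (fun U => A ⊆ U), (-1 : R) ^ U.card
      = if A = Finset.univ then (-1) ^ Fintype.card α else 0 := by
  have hbij : ∑ U ∈ (Finset.univ : Finset α).powerset.filter (fun U => A ⊆ U),
      (-1 : R) ^ U.card = ∑ T ∈ Aᶜ.powerset, (-1 : R) ^ (A ∪ T).card := by
    refine Finset.sum_nbij' (fun U => U \ A) (fun T => A ∪ T) ?_ ?_ ?_ ?_ ?_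
    · intro U hU
      simp only [Finset.mem_filter, Finset.mem_powerset] at hU ⊢
      intro x hx
      simp only [Finset.mem_sdiff] at hx
      simpa using hx.2
    · intro T hT
      simp only [Finset.mem_powerset] at hT
      simp [Finset.mem_filter, Finset.mem_powerset]
    · intro U hU
      simp only [Finset.mem_filter, Finset.mem_powerset] at hU
      exact Finset.union_sdiff_of_subset hU.2
    · intro T hT
      simp only [Finset.mem_powerset] at hT
      rw [Finset.union_sdiff_cancel_left (Finset.disjoint_left.mpr
        (fun x hx hxT => Finset.mem_compl.mp (hT hxT) hx))]
    · intro U hU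
      simp only [Finset.mem_filter, Finset.mem_powerset] at hU
      rw [Finset.union_sdiff_of_subset hU.2]
  rw [hbij]
  have : ∀ T ∈ Aᶜ.powerset, (-1 : R) ^ (A ∪ T).card = (-1) ^ A.card * (-1) ^ T.card := by
    intro T hT
    rw [Finset.mem_powerset] at hT
    have hdisj : Disjoint A T := by
      rw [Finset.disjoint_left]
      intro x hx hxT
      exact Finset.mem_compl.mp (hT hxT) hx
    rw [Finset.card_union_of_disjoint hdisj, pow_add]
  rw [Finset.sum_congr rfl this, ← Finset.mul_sum, aux_L2]
  by_cases h : A = Finset.univ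
  · rw [if_pos (by simp [h]), if_pos h, mul_one, h, Finset.card_univ]
  · rw [if_neg (fun hc => h (by simpa using (Finset.compl_eq_empty_iff _).mp hc)), if_neg h,
      mul_zero]

open scoped Classical in
/-- expansion of `D(G,x)` over essential sets, where `U` is essential
if `N[v] ⊆ U` for some vertex `v`. -/
theorem stmt_17 [Fintype V] [DecidableEq V] [Nonempty V] (G : SimpleGraph V) :
    domPoly G
      = (-1 : Polynomial ℤ) ^ Fintype.card V *
        ∑ U ∈ (Finset.univ : Finset V).powerset.filter
            (fun U : Finset V =>
              ∃ v : V, Finset.univ.filter (fun x : V => x = v ∨ G.Adj v x) ⊆ U),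
          (-1 : Polynomial ℤ) ^ U.card *
            ((1 + X) ^ (U.filter
              (fun u : V =>
                Finset.univ.filter (fun x : V => x = u ∨ G.Adj u x) ⊆ U)).card - 1) := by
  classical
  set N : V → Finset V := fun v => Finset.univ.filter (fun x : V => x = v ∨ G.Adj v x) with hN
  set g : Finset V → Polynomial ℤ := fun U =>
    (-1 : Polynomial ℤ) ^ U.card * ((1 + X) ^ (U.filter (fun u : V => N u ⊆ U)).card - 1)
    with hg
  have hself : ∀ v : V, v ∈ N v := by
    intro v; simp [hN]
  -- Step 1 : extend sum to all subsets
  have h1 : ∑ U ∈ (Finset.univ : Finset V).powerset.filter (fun U => ∃ v : V, N v ⊆ U), g U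
      = ∑ U ∈ (Finset.univ : Finset V).powerset, g U := by
    refine Finset.sum_subset (Finset.filter_subset _ _) ?_
    intro U hU hU'
    have hA : U.filter (fun u : V => N u ⊆ U) = ∅ := by
      rw [Finset.filter_eq_empty_iff]
      intro u hu hNu
      exact hU' (Finset.mem_filter.mpr ⟨hU, ⟨u, hNu⟩⟩)
    simp [hg, hA]
  -- Step 3 material : the main double sum
  have h3 : ∑ U ∈ (Finset.univ : Finset V).powerset,
      (-1 : Polynomial ℤ) ^ U.card * (1 + X) ^ (U.filter (fun u : V => N u ⊆ U)).card
      = (-1 : Polynomial ℤ) ^ Fintype.card V * domPoly G := by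
    have hexp : ∀ U : Finset V,
        (-1 : Polynomial ℤ) ^ U.card * (1 + X) ^ (U.filter (fun u : V => N u ⊆ U)).card
        = ∑ W ∈ (U.filter (fun u : V => N u ⊆ U)).powerset,
            (-1 : Polynomial ℤ) ^ U.card * X ^ W.card := by
      intro U
      rw [← Finset.mul_sum, aux_L1]
    rw [Finset.sum_congr rfl fun U _ => hexp U]
    have hswap : ∑ U ∈ (Finset.univ : Finset V).powerset,
        ∑ W ∈ (U.filter (fun u : V => N u ⊆ U)).powerset,
          (-1 : Polynomial ℤ) ^ U.card * X ^ W.card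
        = ∑ W ∈ (Finset.univ : Finset V).powerset,
            ∑ U ∈ (Finset.univ : Finset V).powerset.filter (fun U => W.biUnion N ⊆ U),
              (-1 : Polynomial ℤ) ^ U.card * X ^ W.card := by
      refine Finset.sum_comm' ?_
      intro U W
      simp only [Finset.mem_powerset, Finset.mem_filter]
      constructor
      · rintro ⟨-, hWU⟩
        refine ⟨⟨Finset.subset_univ _, ?_⟩, Finset.subset_univ _⟩
        intro x hx
        obtain ⟨u, hu, hxu⟩ := Finset.mem_biUnion.mp hx
        exact (Finset.mem_filter.mp (hWU hu)).2 hxu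
      · rintro ⟨⟨-, hBU⟩, -⟩
        refine ⟨Finset.subset_univ _, ?_⟩
        intro u hu
        have hNu : N u ⊆ U := fun x hx => hBU (Finset.mem_biUnion.mpr ⟨u, hu, hx⟩)
        exact Finset.mem_filter.mpr ⟨hNu (hself u), hNu⟩
    rw [hswap]
    have hinner : ∀ W : Finset V,
        ∑ U ∈ (Finset.univ : Finset V).powerset.filter (fun U => W.biUnion N ⊆ U),
          (-1 : Polynomial ℤ) ^ U.card * X ^ W.card
        = (if W.biUnion N = Finset.univ then (-1 : Polynomial ℤ) ^ Fintype.card V else 0)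
            * X ^ W.card := by
      intro W
      rw [← Finset.sum_mul, aux_L3]
    rw [Finset.sum_congr rfl fun W _ => hinner W]
    have hdom : ∀ W : Finset V, (W.biUnion N = Finset.univ) ↔ dominates G W := by
      intro W
      rw [Finset.eq_univ_iff_forall]
      constructor
      · intro h v
        obtain ⟨u, hu, hvu⟩ := Finset.mem_biUnion.mp (h v)
        rcases (Finset.mem_filter.mp hvu).2 with h' | h'
        · exact Or.inl (h' ▸ hu)
        · exact Or.inr ⟨u, hu, h'⟩
      · intro h v
        rcases h v with hv | ⟨u, hu, huv⟩
        · exact Finset.mem_biUnion.mpr ⟨v, hv, hself v⟩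
        · exact Finset.mem_biUnion.mpr ⟨u, hu, Finset.mem_filter.mpr ⟨Finset.mem_univ _,
            Or.inr huv⟩⟩
    calc ∑ W ∈ (Finset.univ : Finset V).powerset,
          (if W.biUnion N = Finset.univ then (-1 : Polynomial ℤ) ^ Fintype.card V else 0)
            * X ^ W.card
        = ∑ W ∈ (Finset.univ : Finset V).powerset,
            (if dominates G W then (-1 : Polynomial ℤ) ^ Fintype.card V * X ^ W.card else 0) := by
          refine Finset.sum_congr rfl fun W _ => ?_
          rw [ite_mul, zero_mul]
          congr 1
          · exact propext (hdom W)
      _ = ∑ W ∈ (Finset.univ : Finset V).powerset.filter (fun W => dominates G W),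
            (-1 : Polynomial ℤ) ^ Fintype.card V * X ^ W.card := (Finset.sum_filter _ _).symm
      _ = (-1 : Polynomial ℤ) ^ Fintype.card V * domPoly G := by
          rw [domPoly, Finset.mul_sum]
  -- Step 2 : split and conclude
  have h2 : ∑ U ∈ (Finset.univ : Finset V).powerset, g U
      = (-1 : Polynomial ℤ) ^ Fintype.card V * domPoly G := by
    have : ∀ U ∈ (Finset.univ : Finset V).powerset, g U
        = (-1 : Polynomial ℤ) ^ U.card * (1 + X) ^ (U.filter (fun u : V => N u ⊆ U)).card
          - (-1 : Polynomial ℤ) ^ U.card := by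
      intro U _
      rw [hg]; ring
    rw [Finset.sum_congr rfl this, Finset.sum_sub_distrib, h3, aux_L2,
      if_neg (Finset.univ_nonempty.ne_empty), sub_zero]
  have hmain : ∑ U ∈ (Finset.univ : Finset V).powerset.filter (fun U => ∃ v : V, N v ⊆ U), g U
      = (-1 : Polynomial ℤ) ^ Fintype.card V * domPoly G := h1.trans h2
  rw [hmain, ← mul_assoc, ← pow_add, Even.neg_one_pow ⟨Fintype.card V, by ring⟩, one_mul]
end

section
/- Let G = (V,E) be a graph. Then, as an identity of rational functions (equivalently, of polynomials after clearing denominators), D(G,x) = (1+x)^{|V|} · ∑_{W ⊆ V} (−x/(1+x))^{|W|} · D(G[W], 1/x), where G[W] is the induced subgraph on W. -/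
open Finset Polynomial

variable {V : Type*}

open scoped Classical in
/-- Evaluation of the domination polynomial at an element of a commutative ring. -/
noncomputable def domPolyAt [Fintype V] (H : SimpleGraph V) {R : Type*} [CommRing R]
    (x : R) : R :=
  ∑ W ∈ Finset.univ.powerset.filter (fun W => dominates H W), x ^ W.card

/-! ### Auxiliary material -/

open scoped Classical in
/-- The closed neighbourhood of a finite set of vertices. -/
noncomputable def clNbhd (G : SimpleGraph V) [Fintype V] (S : Finset V) : Finset V :=
  Finset.univ.filter (fun v => v ∈ S ∨ ∃ u ∈ S, G.Adj u v)

lemma sum_pow_card {K : Type*} [CommRing K] {ι : Type*} [DecidableEq ι] (A : Finset ι) (r : K) :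
    ∑ S ∈ A.powerset, r ^ S.card = (r + 1) ^ A.card := by
  calc ∑ S ∈ A.powerset, r ^ S.card
      = ∑ S ∈ A.powerset, (∏ _i ∈ S, r) * ∏ _i ∈ A \ S, 1 := by simp
    _ = ∏ _i ∈ A, (r + 1) := (Finset.prod_add _ _ _).symm
    _ = (r + 1) ^ A.card := by simp

lemma clNbhd_symm (G : SimpleGraph V) [Fintype V] [DecidableEq V] (S T : Finset V) :
    S ⊆ Finset.univ \ clNbhd G T ↔ T ⊆ Finset.univ \ clNbhd G S := by
  simp only [Finset.subset_iff, clNbhd, Finset.mem_sdiff, Finset.mem_filter, Finset.mem_univ,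
    true_and]
  constructor
  · intro h t ht
    rintro (hts | ⟨s, hs, hadj⟩)
    · exact (h hts (Or.inl ht)).elim
    · exact (h hs (Or.inr ⟨t, ht, hadj.symm⟩)).elim
  · intro h s hs
    rintro (hst | ⟨t, ht, hadj⟩)
    · exact (h hst (Or.inl hs)).elim
    · exact (h ht (Or.inr ⟨s, hs, hadj.symm⟩)).elim

lemma subset_clNbhd (G : SimpleGraph V) [Fintype V] (T : Finset V) : T ⊆ clNbhd G T := by
  classical
  intro t ht
  simp [clNbhd, ht]

lemma domPolyAt_induce (G : SimpleGraph V) [Fintype V] [DecidableEq V] (W : Finset V)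
    {K : Type*} [CommRing K] (y : K) :
    domPolyAt (G.induce (↑W : Set V)) y
      = ∑ T ∈ W.powerset.filter (fun T => W ⊆ clNbhd G T), y ^ T.card := by
  unfold domPolyAt
  refine Finset.sum_nbij' (fun T' => T'.map (Function.Embedding.subtype _))
    (fun T => T.subtype (fun v => v ∈ (↑W : Set V))) ?_ ?_ ?_ ?_ ?_
  · intro T' hT'
    simp only [Finset.mem_filter, Finset.mem_powerset] at hT' ⊢
    obtain ⟨-, hdom⟩ := hT'
    constructor
    · intro v hv
      simp only [Finset.mem_map, Function.Embedding.coe_subtype] at hv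
      obtain ⟨a, -, rfl⟩ := hv
      exact a.2
    · intro w hw
      rcases hdom ⟨w, hw⟩ with h | ⟨u, hu, hadj⟩
      · simp only [clNbhd, Finset.mem_filter, Finset.mem_univ, true_and]
        exact Or.inl (Finset.mem_map_of_mem _ h)
      · simp only [clNbhd, Finset.mem_filter, Finset.mem_univ, true_and]
        refine Or.inr ⟨↑u, Finset.mem_map_of_mem _ hu, ?_⟩
        exact hadj
  · intro T hT
    simp only [Finset.mem_filter, Finset.mem_powerset] at hT ⊢
    obtain ⟨hTW, hdom⟩ := hT
    refine ⟨Finset.subset_univ _, ?_⟩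
    intro v
    have hv : (v : V) ∈ clNbhd G T := hdom v.2
    simp only [clNbhd, Finset.mem_filter, Finset.mem_univ, true_and] at hv
    rcases hv with h | ⟨u, hu, hadj⟩
    · exact Or.inl (by simp [Finset.mem_subtype, h])
    · exact Or.inr ⟨⟨u, hTW hu⟩, by simp [Finset.mem_subtype, hu], hadj⟩
  · intro T' hT'
    ext a
    simp only [Finset.mem_subtype, Finset.mem_map, Function.Embedding.coe_subtype]
    constructor
    · rintro ⟨b, hb, he⟩
      have : b = a := Subtype.ext he
      rwa [← this]
    · intro h
      exact ⟨a, h, rfl⟩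
  · intro T hT
    simp only [Finset.mem_filter, Finset.mem_powerset] at hT
    simp only [Finset.subtype_map]
    ext a
    simp only [Finset.mem_filter]
    exact ⟨fun h => h.1, fun h => ⟨h, hT.1 h⟩⟩
  · intro T' hT'
    simp

/-- as an identity of rational functions,
`D(G,x) = (1+x)^{|V|} ∑_{W ⊆ V} (-x/(1+x))^{|W|} D(G[W], 1/x)`. -/
theorem stmt_18 [Fintype V] [DecidableEq V] (G : SimpleGraph V) :
    domPolyAt G (RatFunc.X : RatFunc ℚ)
      = (1 + RatFunc.X) ^ Fintype.card V *
        ∑ W ∈ (Finset.univ : Finset V).powerset,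
          (-RatFunc.X / (1 + RatFunc.X)) ^ W.card *
            domPolyAt (G.induce (↑W : Set V)) (RatFunc.X : RatFunc ℚ)⁻¹ := by
  classical
  set x : RatFunc ℚ := RatFunc.X with hxdef
  set n := Fintype.card V with hndef
  have hx : x ≠ 0 := RatFunc.X_ne_zero
  have h1x : (1 : RatFunc ℚ) + x ≠ 0 := by
    have : (1 : RatFunc ℚ) + x = algebraMap (Polynomial ℚ) (RatFunc ℚ) (1 + X) := by
      simp [hxdef, RatFunc.algebraMap_X]
    rw [this]
    apply RatFunc.algebraMap_ne_zero
    intro h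
    have := congrArg (fun p => Polynomial.coeff p 0) h
    simp at this
  set r : RatFunc ℚ := -x / (1 + x) with hrdef
  have hr1 : r + 1 = (1 + x)⁻¹ := by
    rw [hrdef]
    field_simp
    ring
  have hxr : x⁻¹ * r = -(1 + x)⁻¹ := by
    rw [hrdef]
    field_simp
  symm
  calc (1 + x) ^ n * ∑ W ∈ (Finset.univ : Finset V).powerset,
          r ^ W.card * domPolyAt (G.induce (↑W : Set V)) x⁻¹
      = ∑ W ∈ (Finset.univ : Finset V).powerset,
          ∑ T ∈ W.powerset.filter (fun T => W ⊆ clNbhd G T),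
            (1 + x) ^ n * r ^ W.card * (x⁻¹) ^ T.card := by
        rw [Finset.mul_sum]
        refine Finset.sum_congr rfl fun W _ => ?_
        rw [domPolyAt_induce, Finset.mul_sum, Finset.mul_sum]
        refine Finset.sum_congr rfl fun T _ => ?_
        ring
    _ = ∑ T ∈ (Finset.univ : Finset V).powerset,
          ∑ W ∈ (clNbhd G T).powerset.filter (fun W => T ⊆ W),
            (1 + x) ^ n * r ^ W.card * (x⁻¹) ^ T.card := by
        have h : ∀ (W T : Finset V),
            W ∈ (Finset.univ : Finset V).powerset ∧
              T ∈ W.powerset.filter (fun T => W ⊆ clNbhd G T)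
            ↔ W ∈ (clNbhd G T).powerset.filter (fun W => T ⊆ W) ∧
              T ∈ (Finset.univ : Finset V).powerset := by
          intro W T
          simp only [Finset.mem_powerset, Finset.mem_filter, Finset.subset_univ, true_and,
            and_true]
          tauto
        exact Finset.sum_comm' h
    _ = ∑ T ∈ (Finset.univ : Finset V).powerset,
          ∑ S ∈ (clNbhd G T \ T).powerset,
            (1 + x) ^ n * r ^ (S.card + T.card) * (x⁻¹) ^ T.card := by
        refine Finset.sum_congr rfl fun T _ => ?_
        refine Finset.sum_nbij' (fun W => W \ T) (fun S => S ∪ T) ?_ ?_ ?_ ?_ ?_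
        · intro W hW
          simp only [Finset.mem_powerset, Finset.mem_filter] at hW ⊢
          exact Finset.sdiff_subset_sdiff hW.1 (le_refl _)
        · intro S hS
          simp only [Finset.mem_powerset, Finset.mem_filter] at hS ⊢
          constructor
          · exact Finset.union_subset (hS.trans (Finset.sdiff_subset)) (subset_clNbhd G T)
          · exact Finset.subset_union_right
        · intro W hW
          simp only [Finset.mem_powerset, Finset.mem_filter] at hW
          exact Finset.sdiff_union_of_subset hW.2
        · intro S hS
          simp only [Finset.mem_powerset] at hS
          have hdisj : Disjoint S T := by
            refine Finset.disjoint_left.2 fun a haS haT => ?_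
            exact (Finset.mem_sdiff.1 (hS haS)).2 haT
          exact Finset.union_sdiff_cancel_right hdisj
        · intro W hW
          simp only [Finset.mem_powerset, Finset.mem_filter] at hW
          rw [Finset.card_sdiff_add_card_eq_card hW.2]
    _ = ∑ T ∈ (Finset.univ : Finset V).powerset,
          (-1 : RatFunc ℚ) ^ T.card * (1 + x) ^ (n - (clNbhd G T).card) := by
        refine Finset.sum_congr rfl fun T _ => ?_
        have hTN : T ⊆ clNbhd G T := subset_clNbhd G T
        have hNn : (clNbhd G T).card ≤ n := by
          rw [hndef, ← Finset.card_univ]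
          exact Finset.card_le_card (Finset.subset_univ _)
        have hTm : T.card ≤ (clNbhd G T).card := Finset.card_le_card hTN
        calc ∑ S ∈ (clNbhd G T \ T).powerset,
                (1 + x) ^ n * r ^ (S.card + T.card) * (x⁻¹) ^ T.card
            = ((1 + x) ^ n * (x⁻¹ * r) ^ T.card) * ∑ S ∈ (clNbhd G T \ T).powerset, r ^ S.card := by
              rw [Finset.mul_sum]
              refine Finset.sum_congr rfl fun S _ => ?_
              rw [pow_add, mul_pow]
              ring
          _ = ((1 + x) ^ n * (x⁻¹ * r) ^ T.card) * (r + 1) ^ ((clNbhd G T).card - T.card) := by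
              rw [sum_pow_card, Finset.card_sdiff_of_subset hTN]
          _ = (-1 : RatFunc ℚ) ^ T.card * (1 + x) ^ (n - (clNbhd G T).card) := by
              have hpow : (1 + x) ^ n
                  = (1 + x) ^ (n - (clNbhd G T).card) * (1 + x) ^ (clNbhd G T).card := by
                rw [← pow_add, Nat.sub_add_cancel hNn]
              have hpow2 : (1 + x) ^ (clNbhd G T).card
                  = (1 + x) ^ T.card * (1 + x) ^ ((clNbhd G T).card - T.card) := by
                rw [← pow_add, Nat.add_sub_cancel' hTm]
              have hne1 : (1 + x) ^ T.card ≠ 0 := pow_ne_zero _ h1x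
              have hne2 : (1 + x) ^ ((clNbhd G T).card - T.card) ≠ 0 := pow_ne_zero _ h1x
              rw [hxr, hr1, neg_pow, inv_pow, inv_pow, hpow, hpow2]
              field_simp
    _ = ∑ T ∈ (Finset.univ : Finset V).powerset,
          ∑ S ∈ (Finset.univ \ clNbhd G T).powerset,
            (-1 : RatFunc ℚ) ^ T.card * x ^ S.card := by
        refine Finset.sum_congr rfl fun T _ => ?_
        rw [← Finset.mul_sum, sum_pow_card, Finset.card_sdiff_of_subset (Finset.subset_univ _),
          Finset.card_univ, add_comm x 1, hndef]
    _ = ∑ S ∈ (Finset.univ : Finset V).powerset,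
          ∑ T ∈ (Finset.univ \ clNbhd G S).powerset,
            (-1 : RatFunc ℚ) ^ T.card * x ^ S.card := by
        have h : ∀ (T S : Finset V),
            T ∈ (Finset.univ : Finset V).powerset ∧
              S ∈ (Finset.univ \ clNbhd G T).powerset
            ↔ T ∈ (Finset.univ \ clNbhd G S).powerset ∧
              S ∈ (Finset.univ : Finset V).powerset := by
          intro T S
          simp only [Finset.mem_powerset, Finset.subset_univ, true_and, and_true]
          exact clNbhd_symm G S T
        exact Finset.sum_comm' h
    _ = ∑ S ∈ (Finset.univ : Finset V).powerset,
          x ^ S.card * (0 : RatFunc ℚ) ^ (Finset.univ \ clNbhd G S).card := by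
        refine Finset.sum_congr rfl fun S _ => ?_
        rw [← Finset.sum_mul, sum_pow_card, neg_add_cancel, mul_comm]
    _ = ∑ S ∈ (Finset.univ : Finset V).powerset.filter (fun S => dominates G S),
          x ^ S.card := by
        rw [Finset.sum_filter]
        refine Finset.sum_congr rfl fun S _ => ?_
        have hiff : Finset.univ \ clNbhd G S = ∅ ↔ dominates G S := by
          rw [Finset.sdiff_eq_empty_iff_subset]
          constructor
          · intro h v
            have := h (Finset.mem_univ v)
            simpa [clNbhd] using this
          · intro h v _
            simpa [clNbhd] using h v
        by_cases hd : dominates G S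
        · rw [if_pos hd, (hiff.2 hd)]
          simp
        · rw [if_neg hd]
          have : (Finset.univ \ clNbhd G S).card ≠ 0 := by
            intro hc
            exact hd (hiff.1 (Finset.card_eq_zero.1 hc))
          rw [zero_pow this, mul_zero]
    _ = domPolyAt G x := by
        unfold domPolyAt
        congr 1
end
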